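/- Let R be a commutative ring, M an R-module, and ω : M × M → R a Z-bilinear pairing satisfying ω(m,m)_0 = 0 for all m, where for r in a group ring R = (ZMod n)[Λ] we write r_0 for the coefficient of the identity, and ω(x^λ m, m') = x^{-λ} ω(m,m'), ω(m, x^λ m') = x^λ ω(m,m'). Then ω(m,m') = -overline{ω(m',m)} for all m, m', where overline denotes the antipode r ↦ ∑ r_λ x^{-λ}. -/

import Mathlib

/-- In the group ring `R = (ZMod n)[Λ]`, the antipode `r ↦ ∑ r_λ x^{-λ}`. -/
noncomputable def antipode {n : ℕ} {Λ : Type*} [AddCommGroup Λ]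
    (r : AddMonoidAlgebra (ZMod n) Λ) : AddMonoidAlgebra (ZMod n) Λ :=
  AddMonoidAlgebra.ofCoeff (Finsupp.mapDomain (fun l => -l) r.coeff)

lemma antipode_apply {n : ℕ} {Λ : Type*} [AddCommGroup Λ]
    (r : AddMonoidAlgebra (ZMod n) Λ) (l : Λ) : (antipode r).coeff l = r.coeff (-l) := by
  have : (antipode r).coeff l = Finsupp.mapDomain (fun x : Λ => -x) r.coeff (-(-l)) := by
    rw [neg_neg]; rfl
  rw [this]
  exact Finsupp.mapDomain_apply neg_injective r.coeff (-l)

lemma antipode_single {n : ℕ} {Λ : Type*} [AddCommGroup Λ] (l : Λ) (c : ZMod n) :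
    antipode (AddMonoidAlgebra.single l c) = AddMonoidAlgebra.single (-l) c := by
  rw [antipode]; exact congrArg AddMonoidAlgebra.ofCoeff Finsupp.mapDomain_single

/-- If `ω : M × M → R` is a ℤ-bilinear, antipode-sesquilinear pairing on a module `M` over
the group ring `R = (ZMod n)[Λ]` whose scalar part is alternating (`(ω m m)_0 = 0`), then
`ω(m, m') = - overline{ω(m', m)}`. -/
theorem stmt_8 (n : ℕ) (Λ : Type*) [AddCommGroup Λ] [AddGroup.FG Λ]
    (M : Type*) [AddCommGroup M] [Module (AddMonoidAlgebra (ZMod n) Λ) M]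
    (ω : M → M → AddMonoidAlgebra (ZMod n) Λ)
    (hadd₁ : ∀ x y m, ω (x + y) m = ω x m + ω y m)
    (hadd₂ : ∀ x m m', ω x (m + m') = ω x m + ω x m')
    (hses₁ : ∀ (r : AddMonoidAlgebra (ZMod n) Λ) m m', ω (r • m) m' = antipode r * ω m m')
    (hses₂ : ∀ (r : AddMonoidAlgebra (ZMod n) Λ) m m', ω m (r • m') = r * ω m m')
    (halt : ∀ m, (ω m m).coeff 0 = 0) :
    ∀ m m', ω m m' = - antipode (ω m' m) := by
  intro m m'
  ext l
  have h := halt (m + (AddMonoidAlgebra.single (-l) 1 : AddMonoidAlgebra (ZMod n) Λ) • m')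
  simp only [hadd₁, hadd₂, hses₁, hses₂, antipode_single, neg_neg] at h
  have h2 : (AddMonoidAlgebra.single (l) (1:ZMod n)
      * (AddMonoidAlgebra.single (-l) (1:ZMod n) * ω m' m')) = ω m' m' := by
    rw [← mul_assoc]
    have : (AddMonoidAlgebra.single (l) (1:ZMod n)) * AddMonoidAlgebra.single (-l) (1:ZMod n)
        = (1 : AddMonoidAlgebra (ZMod n) Λ) := by
      rw [AddMonoidAlgebra.single_mul_single, add_neg_cancel, one_mul]; rfl
    rw [this, one_mul]
  rw [h2] at h
  have key : (AddMonoidAlgebra.single (-l) (1:ZMod n) * ω m m').coeff 0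
      + (AddMonoidAlgebra.single (l) (1:ZMod n) * ω m' m).coeff 0 = 0 := by
    have h3 : (ω m m).coeff 0 + (AddMonoidAlgebra.single (-l) (1:ZMod n) * ω m m').coeff 0
        + ((AddMonoidAlgebra.single (l) (1:ZMod n) * ω m' m).coeff 0 + (ω m' m').coeff 0) = 0 := h
    rw [halt m, halt m'] at h3
    simpa using h3
  rw [AddMonoidAlgebra.coeff_single_mul_apply, AddMonoidAlgebra.coeff_single_mul_apply] at key
  simp only [one_mul, neg_neg, neg_add_cancel, add_zero, neg_zero] at key
  rw [AddMonoidAlgebra.coeff_neg, Finsupp.neg_apply, antipode_apply]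
  linear_combination key
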